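/- arXiv:2312.06629 — 3 statements merged into one kernel-verified Lean document; each statement's English description precedes it below -/
import Mathlib

section
/- If p, p+k, p+2k, ..., p+(l-1)k is an arithmetic progression consisting of l prime numbers with common difference k, then k is divisible by every prime q < l (equivalently, k is a multiple of the product of all primes less than l). -/
theorem primorial_divides_common_difference (p k l : ℕ) (hp : p.Prime) (hk : 1 ≤ k)
    (hAP : ∀ i < l, Nat.Prime (p + i * k)) :
    (∀ q : ℕ, q.Prime → q < l → q ∣ k) ∧ primorial (l - 1) ∣ k := by
  -- First: p ≥ l, since otherwise p + p*k = p*(1+k) would be a composite term.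
  have hpl : l ≤ p := by
    by_contra h
    push_neg at h
    have hprime := hAP p h
    have heq : p + p * k = p * (1 + k) := by ring
    rw [heq] at hprime
    exact Nat.not_prime_mul hp.one_lt.ne' (by omega) hprime
  have main : ∀ q : ℕ, q.Prime → q < l → q ∣ k := by
    intro q hq hql
    by_contra hqk
    haveI : Fact q.Prime := ⟨hq⟩
    have hkU : IsUnit (k : ZMod q) := by
      rw [ZMod.isUnit_iff_coprime]
      exact Nat.Coprime.symm (hq.coprime_iff_not_dvd.mpr hqk)
    -- choose i with p + i*k ≡ 0 mod q
    set i : ℕ := (-(p : ZMod q) * (hkU.unit⁻¹ : (ZMod q)ˣ)).val with hi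
    have hiq : i < q := ZMod.val_lt _
    have hzero : ((p + i * k : ℕ) : ZMod q) = 0 := by
      push_cast
      rw [hi, ZMod.natCast_val, ZMod.cast_id]
      have : ((hkU.unit⁻¹ : (ZMod q)ˣ) : ZMod q) * k = 1 := by
        have := hkU.unit.inv_mul
        rwa [IsUnit.unit_spec] at this
      calc (p : ZMod q) + -(p : ZMod q) * (hkU.unit⁻¹ : (ZMod q)ˣ) * k
          = (p : ZMod q) + -(p : ZMod q) * (((hkU.unit⁻¹ : (ZMod q)ˣ) : ZMod q) * k) := by ring
        _ = 0 := by rw [this]; ring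
    have hdvd : q ∣ p + i * k := (ZMod.natCast_eq_zero_iff _ _).mp hzero
    have hterm : Nat.Prime (p + i * k) := hAP i (by omega)
    have : p + i * k = q := ((Nat.prime_dvd_prime_iff_eq hq hterm).mp hdvd).symm
    omega
  refine ⟨main, ?_⟩
  unfold primorial
  refine Finset.prod_primes_dvd _ (fun a ha => ?_) (fun a ha => ?_)
  · simp only [Finset.mem_filter] at ha
    exact ha.2.prime
  · simp only [Finset.mem_filter, Finset.mem_range] at ha
    exact main a ha.2 (by have h2 := ha.2.two_le; have h1 := ha.1; omega)
end

section
/- For every prime p and every positive integer k, the orbit sequence S(p,k) = (p, φ_k(p), φ_k²(p), ...) is eventually periodic: there exist m ≥ 0 and l ≥ 1 such that φ_k^{i+l}(p) = φ_k^i(p) for all i ≥ m. -/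
/-- The largest prime factor of `n` (0 if `n` has no prime factor). -/
def maxPrimeFac (n : ℕ) : ℕ := n.primeFactors.sup id

/-- The map φ_k : x ↦ x + k if x is prime, else the largest prime factor of x. -/
def phi (k x : ℕ) : ℕ := if x.Prime then x + k else maxPrimeFac x

/-- A natural number is composite if it is at least 2 and not prime. -/
def Composite (n : ℕ) : Prop := 2 ≤ n ∧ ¬ n.Prime

lemma maxPrimeFac_mem {n : ℕ} (hn : 2 ≤ n) : maxPrimeFac n ∈ n.primeFactors := by
  have hne : n.primeFactors.Nonempty := Nat.nonempty_primeFactors.mpr (by omega)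
  obtain ⟨b, hb, he⟩ := Finset.exists_mem_eq_sup _ hne id
  rw [maxPrimeFac, he]; exact hb

lemma maxPrimeFac_prime {n : ℕ} (hn : 2 ≤ n) : (maxPrimeFac n).Prime :=
  Nat.prime_of_mem_primeFactors (maxPrimeFac_mem hn)

lemma two_mul_maxPrimeFac_le {n : ℕ} (hn : 2 ≤ n) (hnp : ¬ n.Prime) :
    2 * maxPrimeFac n ≤ n := by
  have hr := maxPrimeFac_prime hn
  obtain ⟨m, hm⟩ := Nat.dvd_of_mem_primeFactors (maxPrimeFac_mem hn)
  have hm0 : m ≠ 0 := by rintro rfl; omega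
  have hm1 : m ≠ 1 := by rintro rfl; simp at hm; exact hnp (hm ▸ hr)
  have h2 : 2 ≤ m := by omega
  nlinarith [hr.two_le]

/-- If `s` is a prime not dividing `k`, then from any prime `q` one of the next
`2s` steps of the arithmetic progression `q + j*k` is not prime. -/
lemma exists_nonprime_step {s k q : ℕ} (hs : s.Prime) (hk : 1 ≤ k)
    (hsk : ¬ s ∣ k) (hq : q.Prime) :
    ∃ j, 1 ≤ j ∧ j ≤ 2 * s ∧ ¬ (q + j * k).Prime := by
  haveI : Fact s.Prime := ⟨hs⟩
  have hs2 := hs.two_le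
  -- find j1 with 1 ≤ j1 ≤ s and s ∣ q + j1 * k
  obtain ⟨j1, hj1a, hj1b, hdvd⟩ : ∃ j1, 1 ≤ j1 ∧ j1 ≤ s ∧ s ∣ q + j1 * k := by
    by_cases hsq : s ∣ q
    · exact ⟨s, by omega, le_refl _, Nat.dvd_add hsq ⟨k, by ring⟩⟩
    · have hu : (k : ZMod s) ≠ 0 := fun h =>
        hsk ((ZMod.natCast_eq_zero_iff k s).mp h)
      set j1 : ℕ := (((-(q : ZMod s)) * (k : ZMod s)⁻¹)).val with hj1
      have hlt : j1 < s := ZMod.val_lt _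
      have hcast : ((j1 : ℕ) : ZMod s) = (-(q : ZMod s)) * (k : ZMod s)⁻¹ :=
        ZMod.natCast_zmod_val _
      have hdvd : s ∣ q + j1 * k := by
        rw [← ZMod.natCast_eq_zero_iff]
        push_cast
        rw [hcast]
        field_simp
        ring
      have hne0 : j1 ≠ 0 := by
        rintro h
        rw [h] at hdvd
        simp at hdvd
        exact hsq hdvd
      exact ⟨j1, by omega, by omega, hdvd⟩
  by_cases heq : q + j1 * k = s
  · refine ⟨j1 + s, by omega, by omega, fun hn => ?_⟩
    have hdvd2 : s ∣ q + (j1 + s) * k := by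
      have : q + (j1 + s) * k = (q + j1 * k) + s * k := by ring
      rw [this]; exact Nat.dvd_add hdvd ⟨k, rfl⟩
    have := (Nat.prime_dvd_prime_iff_eq hs hn).mp hdvd2
    have hq2 := hq.two_le
    nlinarith [this]
  · refine ⟨j1, hj1a, by omega, fun hn => ?_⟩
    exact heq ((Nat.prime_dvd_prime_iff_eq hs hn).mp hdvd).symm

lemma orbit_bounded (p k : ℕ) (hp : p.Prime) (hk : 1 ≤ k) :
    ∃ B, ∀ n, (phi k)^[n] p ≤ B := by
  obtain ⟨s, hsge, hs⟩ := Nat.exists_infinite_primes (k + 1)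
  have hsk : ¬ s ∣ k := fun h => by have := Nat.le_of_dvd hk h; omega
  set M := max p (2 * s * k) with hM
  refine ⟨M + 2 * s * k, fun n => ?_⟩
  have claim : ∀ n, ∃ q j, q.Prime ∧ q ≤ M ∧ j ≤ 2 * s ∧
      (phi k)^[n] p = q + j * k ∧ ∀ i < j, (q + i * k).Prime := by
    intro n
    induction n with
    | zero => exact ⟨p, 0, hp, le_max_left _ _, by omega, by simp, fun i h => by omega⟩
    | succ n ih =>
      obtain ⟨q, j, hq, hqM, hj, hx, hall⟩ := ih
      rw [Function.iterate_succ_apply', hx]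
      by_cases hxp : (q + j * k).Prime
      · have hlt : j + 1 ≤ 2 * s := by
          obtain ⟨j', h1, h2, h3⟩ := exists_nonprime_step hs hk hsk hq
          by_contra hcon
          have : j' < j ∨ j' = j := by omega
          rcases this with h | h
          · exact h3 (hall j' h)
          · exact h3 (h ▸ hxp)
        refine ⟨q, j + 1, hq, hqM, hlt, ?_, ?_⟩
        · simp only [phi, if_pos hxp]; ring
        · intro i hi
          rcases Nat.lt_succ_iff_lt_or_eq.mp hi with h | h
          · exact hall i h
          · exact h ▸ hxp
      · have hx2 : 2 ≤ q + j * k := le_trans hq.two_le (by omega)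
        have hr := maxPrimeFac_prime hx2
        have hle := two_mul_maxPrimeFac_le hx2 hxp
        have hrM : maxPrimeFac (q + j * k) ≤ M := by
          have h1 : q + j * k ≤ M + 2 * s * k := by
            have := Nat.mul_le_mul_right k hj
            omega
          have h2 : 2 * s * k ≤ M := le_max_right _ _
          omega
        refine ⟨maxPrimeFac (q + j * k), 0, hr, hrM, by omega, ?_, fun i h => by omega⟩
        simp [phi, if_neg hxp]
  obtain ⟨q, j, hq, hqM, hj, hx, _⟩ := claim n
  have := Nat.mul_le_mul_right k hj
  omega

theorem orbit_eventually_periodic (p k : ℕ) (hp : p.Prime) (hk : 1 ≤ k) :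
    ∃ (m l : ℕ), 1 ≤ l ∧ ∀ i ≥ m, (phi k)^[i + l] p = (phi k)^[i] p := by
  obtain ⟨B, hB⟩ := orbit_bounded p k hp hk
  have : ∃ a b : ℕ, a < b ∧ (phi k)^[a] p = (phi k)^[b] p := by
    have : ¬ Function.Injective (fun n : ℕ => (⟨(phi k)^[n] p, Nat.lt_succ_of_le (hB n)⟩ : Fin (B + 1))) := by
      exact fun hinj => not_injective_infinite_finite _ hinj
    rw [Function.not_injective_iff] at this
    obtain ⟨a, b, hab, hne⟩ := this
    have heq : (phi k)^[a] p = (phi k)^[b] p := congrArg Fin.val hab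
    rcases Nat.lt_or_ge a b with h | h
    · exact ⟨a, b, h, heq⟩
    · exact ⟨b, a, by omega, heq.symm⟩
  obtain ⟨a, b, hab, heq⟩ := this
  refine ⟨a, b - a, by omega, fun i hi => ?_⟩
  obtain ⟨t, rfl⟩ := Nat.exists_eq_add_of_le hi
  have hb : a + (b - a) = b := by omega
  calc (phi k)^[a + t + (b - a)] p = (phi k)^[t] ((phi k)^[a + (b - a)] p) := by
        rw [← Function.iterate_add_apply]; ring_nf
    _ = (phi k)^[t] ((phi k)^[a] p) := by rw [hb, ← heq]
    _ = (phi k)^[a + t] p := by rw [← Function.iterate_add_apply]; ring_nf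
end

section
/- Fix a positive integer k. For every x ≥ 2, the eventual cycle of the orbit of x under φ_k contains at least one prime p with p ≤ k²/2 or p ∈ {2,3}. Consequently, the number of distinct cycles of φ_k, as x ranges over all integers ≥ 2, is finite and bounded above by the number of primes ≤ k²/2 (plus a bounded constant for small primes). -/
/-- A cycle of φ_k: a finite nonempty set of integers ≥ 2, invariant under φ_k,
on which φ_k acts transitively (hence as a cyclic permutation). -/
def IsCycle (k : ℕ) (C : Finset ℕ) : Prop :=
  C.Nonempty ∧ (∀ x ∈ C, 2 ≤ x) ∧ (∀ x ∈ C, phi k x ∈ C) ∧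
    ∀ x ∈ C, ∀ y ∈ C, ∃ n, (phi k)^[n] x = y

/-- A "good" prime: small enough, or 2 or 3. -/
def GoodP (k p : ℕ) : Prop := p.Prime ∧ (2 * p ≤ k ^ 2 ∨ p = 2 ∨ p = 3)

lemma maxPrimeFac_dvd {n : ℕ} (hn : 2 ≤ n) : maxPrimeFac n ∣ n :=
  Nat.dvd_of_mem_primeFactors (maxPrimeFac_mem hn)

lemma maxPrimeFac_mul_le {n r : ℕ} (hn : 2 ≤ n) (hnp : ¬ n.Prime)
    (hall : ∀ t, t.Prime → t ∣ n → r ≤ t) : maxPrimeFac n * r ≤ n := by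
  have hq := maxPrimeFac_prime hn
  have hqd := maxPrimeFac_dvd hn
  obtain ⟨m, hm⟩ := hqd
  have hm0 : m ≠ 0 := by rintro rfl; omega
  have hm1 : m ≠ 1 := by rintro rfl; rw [mul_one] at hm; exact hnp (hm ▸ hq)
  have hm2 : 2 ≤ m := by omega
  have hmf : m.minFac.Prime := Nat.minFac_prime hm1
  have hmfd : m.minFac ∣ n := hm ▸ Dvd.dvd.mul_left (Nat.minFac_dvd m) _
  have h1 : r ≤ m.minFac := hall _ hmf hmfd
  have h2 : m.minFac ≤ m := Nat.minFac_le (by omega)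
  calc maxPrimeFac n * r ≤ maxPrimeFac n * m := Nat.mul_le_mul_left _ (by omega)
    _ = n := hm.symm

lemma two_le_phi {k x : ℕ} (hk : 1 ≤ k) (hx : 2 ≤ x) : 2 ≤ phi k x := by
  unfold phi
  split
  · omega
  · exact (maxPrimeFac_prime hx).two_le

lemma two_le_iter {k x : ℕ} (hk : 1 ≤ k) (hx : 2 ≤ x) (n : ℕ) : 2 ≤ (phi k)^[n] x := by
  induction n with
  | zero => simpa using hx
  | succ n ih => rw [Function.iterate_succ_apply']; exact two_le_phi hk ih

lemma iter_chain (k p j : ℕ) (h : ∀ l, l < j → (p + l * k).Prime) :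
    (phi k)^[j] p = p + j * k := by
  induction j with
  | zero => simp
  | succ n ih =>
    rw [Function.iterate_succ_apply', ih (fun l hl => h l (Nat.lt_succ_of_lt hl))]
    have hpr := h n (Nat.lt_succ_self n)
    simp only [phi, if_pos hpr]
    ring

/-- The smallest prime not dividing `k` is at most `k+1`. -/
lemma exists_small_nondvd_prime (k : ℕ) (hk : 1 ≤ k) :
    ∃ r, r.Prime ∧ ¬ r ∣ k ∧ r ≤ k + 1 ∧ ∀ t, t < r → t.Prime → t ∣ k := by
  have hrex : ∃ t, t.Prime ∧ ¬ t ∣ k := by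
    obtain ⟨q, hq1, hq2⟩ := Nat.exists_infinite_primes (k + 1)
    exact ⟨q, hq2, fun hd => by have := Nat.le_of_dvd hk hd; omega⟩
  classical
  set r := Nat.find hrex with hrdef
  have hr := Nat.find_spec hrex
  have hrmin : ∀ t, t < r → t.Prime → t ∣ k := by
    intro t ht htp
    have := Nat.find_min hrex ht
    simp only [not_and, not_not] at this
    exact this htp
  refine ⟨r, hr.1, hr.2, ?_, hrmin⟩
  by_cases h2k : 2 ∣ k
  · by_cases hk4 : k ≤ 3
    · -- k even and ≤ 3 means k = 2
      have hk2 : k = 2 := by omega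
      have : r ≤ 3 := Nat.find_le ⟨Nat.prime_three, by omega⟩
      omega
    · -- k even, k ≥ 4 : use Bertrand with k/2
      obtain ⟨q, hqp, hq1, hq2⟩ := Nat.exists_prime_lt_and_le_two_mul (k / 2) (by omega)
      have hqk : q ≤ k := by omega
      have hqnd : ¬ q ∣ k := by
        intro hd
        obtain ⟨c, hc⟩ := hd
        rcases Nat.lt_or_ge c 2 with hc2 | hc2
        · interval_cases c
          · simp at hc; omega
          · rw [mul_one] at hc
            subst hc
            rcases hqp.eq_one_or_self_of_dvd 2 h2k with h | h <;> omega
        · have : 2 * q ≤ q * c := by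
            calc 2 * q = q * 2 := by ring
            _ ≤ q * c := Nat.mul_le_mul_left _ hc2
          omega
      have : r ≤ q := Nat.find_le ⟨hqp, hqnd⟩
      omega
  · have : r ≤ 2 := Nat.find_le ⟨Nat.prime_two, h2k⟩
    omega

/-- Descent: a prime that is not good maps (in some positive number of steps)
to a strictly smaller prime. -/
lemma descend (k p : ℕ) (hk : 1 ≤ k) (hp : p.Prime) (h2 : ¬ 2 * p ≤ k ^ 2)
    (hne2 : p ≠ 2) (hne3 : p ≠ 3) :
    ∃ m, ((phi k)^[m] p).Prime ∧ (phi k)^[m] p < p := by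
  classical
  have hp4 : p ≠ 4 := by rintro rfl; exact absurd hp (by decide)
  have hp5 : 5 ≤ p := by have := hp.two_le; omega
  obtain ⟨r, hrp, hrnd, hrk, hrmin⟩ := exists_small_nondvd_prime k hk
  have hr2 : 2 ≤ r := hrp.two_le
  -- find i ∈ [1, r] with r ∣ p + i * k
  haveI : Fact r.Prime := ⟨hrp⟩
  have hknz : (k : ZMod r) ≠ 0 := by
    rw [Ne, ZMod.natCast_eq_zero_iff]
    exact hrnd
  set i₁ := ((-(p : ZMod r)) * (k : ZMod r)⁻¹).val with hi₁def
  have hdvd₁ : r ∣ p + i₁ * k := by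
    rw [← ZMod.natCast_eq_zero_iff]
    push_cast
    rw [ZMod.natCast_zmod_val]
    rw [mul_assoc, inv_mul_cancel₀ hknz]
    ring
  have hi₁lt : i₁ < r := ZMod.val_lt _
  set i := if i₁ = 0 then r else i₁ with hidef
  have hi1 : 1 ≤ i := by rw [hidef]; split <;> omega
  have hir : i ≤ r := by rw [hidef]; split <;> omega
  have hdvd : r ∣ p + i * k := by
    rw [hidef]
    split
    · rename_i h0
      rw [h0] at hdvd₁
      simp only [zero_mul, add_zero] at hdvd₁
      exact Dvd.dvd.add hdvd₁ (dvd_mul_right r k)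
    · exact hdvd₁
  have hicomp : ¬ (p + i * k).Prime := by
    intro hpr
    rcases (Nat.Prime.eq_one_or_self_of_dvd hpr r hdvd) with h | h
    · exact absurd h hrp.ne_one
    · have : 1 * k ≤ i * k := Nat.mul_le_mul_right k hi1
      omega
  have hjex : ∃ l, 0 < l ∧ ¬ (p + l * k).Prime := ⟨i, by omega, hicomp⟩
  set j := Nat.find hjex with hjdef
  have hj := Nat.find_spec hjex
  have hjle : j ≤ i := Nat.find_le ⟨by omega, hicomp⟩
  have hjprime : ∀ l, l < j → (p + l * k).Prime := by
    intro l hl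
    rcases Nat.eq_zero_or_pos l with rfl | hl0
    · simpa using hp
    · by_contra hnp
      exact Nat.find_min hjex hl ⟨hl0, hnp⟩
  have hciter : (phi k)^[j] p = p + j * k := iter_chain k p j hjprime
  set c := p + j * k with hcdef
  have hc2 : 2 ≤ c := by omega
  have hccomp : ¬ c.Prime := hj.2
  set q := maxPrimeFac c with hqdef
  have hqp : q.Prime := maxPrimeFac_prime hc2
  have hqd : q ∣ c := maxPrimeFac_dvd hc2
  have hiter : (phi k)^[j + 1] p = q := by
    rw [Function.iterate_succ_apply', hciter]
    simp only [phi, if_neg hccomp]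
    exact hqdef.symm
  by_cases hpc : p ∣ c
  · exfalso
    have hpjk : p ∣ j * k := (Nat.dvd_add_right (dvd_refl p)).mp hpc
    rcases (Nat.Prime.dvd_mul hp).mp hpjk with hpj | hpk
    · have hpj' : p ≤ j := Nat.le_of_dvd (by omega) hpj
      -- p ≤ j ≤ i ≤ r ≤ k + 1
      rcases Nat.lt_or_ge k 3 with hk3 | hk3
      · -- k ≤ 2 : p ≤ 3, contradiction with p ≥ 5
        omega
      · have : 3 * k ≤ k * k := Nat.mul_le_mul_right k hk3
        have hk2 : k ^ 2 = k * k := sq k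
        omega
    · have hpk' : p ≤ k := Nat.le_of_dvd hk hpk
      have : 2 * k ≤ k * k := Nat.mul_le_mul_right k (by omega)
      have hk2 : k ^ 2 = k * k := sq k
      omega
  · -- descent case
    have hall : ∀ t, t.Prime → t ∣ c → r ≤ t := by
      intro t htp htd
      by_contra hlt
      push_neg at hlt
      have htk : t ∣ k := hrmin t hlt htp
      have htjk : t ∣ j * k := Dvd.dvd.mul_left htk j
      have htp' : t ∣ p := (Nat.dvd_add_iff_left htjk).mpr htd
      have : t = p := (Nat.prime_dvd_prime_iff_eq htp hp).mp htp'
      rw [this] at htd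
      exact hpc htd
    have hqr : q * r ≤ c := maxPrimeFac_mul_le hc2 hccomp hall
    have hk2 : k ^ 2 = k * k := sq k
    have hlt : c < p * r := by
      by_cases hr2' : r = 2
      · -- k odd, j = 1, c = p + k, need k < p
        have hkodd : ¬ 2 ∣ k := hr2' ▸ hrnd
        have hpodd : ¬ 2 ∣ p := by
          intro h2p
          have := (Nat.Prime.eq_one_or_self_of_dvd hp 2 h2p)
          omega
        have h1c : ¬ (p + 1 * k).Prime := by
          intro hpr
          have h2d : 2 ∣ p + 1 * k := by omega
          rcases (Nat.Prime.eq_one_or_self_of_dvd hpr 2 h2d) with h | h <;> omega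
        have hj1 : j = 1 := by
          have hle : j ≤ 1 := Nat.find_le ⟨Nat.one_pos, h1c⟩
          omega
        have hkp : k < p := by
          rcases Nat.lt_or_ge k 5 with h | h
          · omega
          · have : 5 * k ≤ k * k := Nat.mul_le_mul_right k h
            omega
        rw [hcdef, hj1, hr2']
        omega
      · have hr3 : 3 ≤ r := by omega
        have hke : 2 ∣ k := hrmin 2 (by omega) Nat.prime_two
        have hp2k : 2 * k < p := by
          rcases Nat.lt_or_ge k 4 with h | h
          · -- k even, k < 4 : k = 2
            omega
          · have : 4 * k ≤ k * k := Nat.mul_le_mul_right k h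
            omega
        have hckr : c ≤ p + r * k := by
          have : j * k ≤ r * k := Nat.mul_le_mul_right k (by omega)
          omega
        have hkey : p + r * k < p * r := by
          have h1 : p + 2 * k < 2 * p := by omega
          have h2 : (r - 2) * k ≤ (r - 2) * p := Nat.mul_le_mul_left _ (by omega)
          have h3 : r * k = (r - 2) * k + 2 * k := by
            have : r - 2 + 2 = r := by omega
            calc r * k = (r - 2 + 2) * k := by rw [this]
            _ = (r - 2) * k + 2 * k := by ring
          have h4 : p * r = (r - 2) * p + 2 * p := by
            have : r - 2 + 2 = r := by omega
            calc p * r = (r - 2 + 2) * p := by rw [this]; ring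
            _ = (r - 2) * p + 2 * p := by ring
          omega
        omega
    refine ⟨j + 1, by rw [hiter]; exact hqp, ?_⟩
    rw [hiter]
    have : q * r < p * r := lt_of_le_of_lt hqr hlt
    exact Nat.lt_of_mul_lt_mul_right this

lemma prime_reach (k : ℕ) (hk : 1 ≤ k) :
    ∀ p, p.Prime → ∃ m, GoodP k ((phi k)^[m] p) := by
  intro p
  induction p using Nat.strong_induction_on with
  | _ p ih =>
    intro hp
    by_cases hg : 2 * p ≤ k ^ 2 ∨ p = 2 ∨ p = 3
    · exact ⟨0, by simpa [GoodP] using ⟨hp, hg⟩⟩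
    · push_neg at hg
      obtain ⟨m1, hq, hlt⟩ := descend k p hk hp (by omega) hg.2.1 hg.2.2
      obtain ⟨m2, hm2⟩ := ih _ hlt hq
      exact ⟨m2 + m1, by rwa [Function.iterate_add_apply]⟩

lemma reach (k : ℕ) (hk : 1 ≤ k) (x : ℕ) (hx : 2 ≤ x) :
    ∃ m, GoodP k ((phi k)^[m] x) := by
  by_cases hxp : x.Prime
  · exact prime_reach k hk x hxp
  · have h1 : phi k x = maxPrimeFac x := if_neg hxp
    have hmp : (maxPrimeFac x).Prime := maxPrimeFac_prime hx
    obtain ⟨m, hm⟩ := prime_reach k hk _ hmp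
    refine ⟨m + 1, ?_⟩
    rw [Function.iterate_add_apply, Function.iterate_one, h1]
    exact hm

lemma cycle_iter_mem {k : ℕ} {D : Finset ℕ} (hD : IsCycle k D) {x : ℕ} (hx : x ∈ D) :
    ∀ n, (phi k)^[n] x ∈ D := by
  intro n
  induction n with
  | zero => simpa using hx
  | succ n ih => rw [Function.iterate_succ_apply']; exact hD.2.2.1 _ ih

lemma cycle_eq {k : ℕ} {C D : Finset ℕ} (hC : IsCycle k C) (hD : IsCycle k D)
    {x : ℕ} (hxC : x ∈ C) (hxD : x ∈ D) : C = D := by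
  apply Finset.ext
  intro a
  constructor
  · intro ha
    obtain ⟨n, hn⟩ := hC.2.2.2 x hxC a ha
    exact hn ▸ cycle_iter_mem hD hxD n
  · intro ha
    obtain ⟨n, hn⟩ := hD.2.2.2 x hxD a ha
    exact hn ▸ cycle_iter_mem hC hxC n

theorem cycles_finite (k : ℕ) (hk : 1 ≤ k) :
    (∀ x ≥ 2, ∃ p : ℕ, p.Prime ∧ (2 * p ≤ k ^ 2 ∨ p = 2 ∨ p = 3) ∧
      ∀ n : ℕ, ∃ i ≥ n, (phi k)^[i] x = p) ∧
    {C : Finset ℕ | IsCycle k C}.Finite ∧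
    {C : Finset ℕ | IsCycle k C}.ncard ≤
      ((Finset.range (k ^ 2 / 2 + 1)).filter Nat.Prime).card + 2 := by
  classical
  -- Part 1
  have key : ∀ x, 2 ≤ x → ∀ n : ℕ, ∃ i ≥ n, GoodP k ((phi k)^[i] x) := by
    intro x hx n
    obtain ⟨m, hm⟩ := reach k hk _ (two_le_iter hk hx n)
    refine ⟨m + n, by omega, ?_⟩
    rwa [Function.iterate_add_apply]
  have part1 : ∀ x ≥ 2, ∃ p : ℕ, p.Prime ∧ (2 * p ≤ k ^ 2 ∨ p = 2 ∨ p = 3) ∧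
      ∀ n : ℕ, ∃ i ≥ n, (phi k)^[i] x = p := by
    intro x hx
    by_contra hcon
    push_neg at hcon
    set B : ℕ → ℕ := fun p =>
      if h : p.Prime ∧ (2 * p ≤ k ^ 2 ∨ p = 2 ∨ p = 3) then
        Classical.choose (hcon p h.1 h.2) else 0 with hBdef
    set N := (Finset.range (k ^ 2 + 4)).sup B with hNdef
    obtain ⟨i, hiN, hgood⟩ := key x hx N
    set p := (phi k)^[i] x with hpdef
    have hpmem : p ∈ Finset.range (k ^ 2 + 4) := by
      rw [Finset.mem_range]
      rcases hgood.2 with h | h | h <;> omega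
    have hBp : B p ≤ N := Finset.le_sup hpmem
    have hspec := Classical.choose_spec (hcon p hgood.1 hgood.2)
    have hBval : B p = Classical.choose (hcon p hgood.1 hgood.2) := by
      rw [hBdef]
      simp only [dif_pos (⟨hgood.1, hgood.2⟩ : p.Prime ∧ (2 * p ≤ k ^ 2 ∨ p = 2 ∨ p = 3))]
    exact hspec i (by omega) rfl
  refine ⟨part1, ?_⟩
  -- Part 2
  set S := {C : Finset ℕ | IsCycle k C} with hSdef
  set G₂ : Finset ℕ := ((Finset.range (k ^ 2 / 2 + 1)).filter Nat.Prime) ∪ {2, 3} with hG₂def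
  set f : Finset ℕ → ℕ := fun C =>
    if h : ∃ p, p ∈ C ∧ GoodP k p then Classical.choose h else 0 with hfdef
  have hfspec : ∀ C ∈ S, f C ∈ C ∧ GoodP k (f C) := by
    intro C hC
    have hex : ∃ p, p ∈ C ∧ GoodP k p := by
      obtain ⟨x, hx⟩ := hC.1
      have hx2 : 2 ≤ x := hC.2.1 x hx
      obtain ⟨m, hm⟩ := reach k hk x hx2
      exact ⟨(phi k)^[m] x, cycle_iter_mem hC hx m, hm⟩
    have := Classical.choose_spec hex
    rw [hfdef]
    simp only [dif_pos hex]
    exact this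
  have hinj : Set.InjOn f S := by
    intro C hC D hD hfeq
    exact cycle_eq hC hD (hfspec C hC).1 (hfeq ▸ (hfspec D hD).1)
  have himg : f '' S ⊆ ↑G₂ := by
    rintro _ ⟨C, hC, rfl⟩
    obtain ⟨-, hgp⟩ := hfspec C hC
    rw [hG₂def]
    simp only [Finset.coe_union, Set.mem_union, Finset.coe_filter, Set.mem_setOf_eq,
      Finset.mem_range, Finset.coe_insert, Set.mem_insert_iff, Finset.coe_singleton,
      Set.mem_singleton_iff]
    rcases hgp.2 with h | h | h
    · left
      refine ⟨?_, hgp.1⟩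
      have : f C ≤ k ^ 2 / 2 := Nat.le_div_iff_mul_le (by omega) |>.mpr (by omega)
      omega
    · right; left; exact h
    · right; right; exact h
  have hfin : S.Finite := Set.Finite.of_finite_image (G₂.finite_toSet.subset himg) hinj
  refine ⟨hfin, ?_⟩
  calc S.ncard = (f '' S).ncard := (Set.ncard_image_of_injOn hinj).symm
    _ ≤ (↑G₂ : Set ℕ).ncard := Set.ncard_le_ncard himg G₂.finite_toSet
    _ = G₂.card := Set.ncard_coe_finset _
    _ ≤ ((Finset.range (k ^ 2 / 2 + 1)).filter Nat.Prime).card + ({2, 3} : Finset ℕ).card :=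
        Finset.card_union_le _ _
    _ ≤ ((Finset.range (k ^ 2 / 2 + 1)).filter Nat.Prime).card + 2 := by
        simp
end
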